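/- For the sequences μ_l^N, β_l^N defined via the nonuniform divided-difference recursion from μ_l^2[k] = 1_{{l−1}}(k)/(t_{k+2}−t_k), β_l^2[k] = 1_{{l}}(k)/(t_{k+2}−t_k): consecutive values of μ_l^N (and of β_l^N) have non-strictly opposite signs, i.e. sign(μ_l^N[k])·sign(μ_l^N[k+1]) ≤ 0, sign(β_l^N[k])·sign(β_l^N[k+1]) ≤ 0, and sign(μ_l^N[k])·sign(β_l^N[k]) ≤ 0 for all k ∈ ℤ and N ≥ 2. -/

import Mathlib

/-- The nonuniform divided-difference operator on nodes `t`. -/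
noncomputable def nonUnifDiff (t : ℤ → ℝ) (f : ℤ → ℝ) : ℕ → ℤ → ℝ
  | 0 => f
  | N + 1 => fun k =>
      (nonUnifDiff t f N (k + 1) - nonUnifDiff t f N k) / (t (k + (N : ℤ) + 1) - t k)

/-- Iterates the divided-difference recursion starting from order `2`:
`liftTwo t f m` is the order-`(2+m)` sequence obtained from the order-`2` sequence `f`,
so that the step from order `N = m+2` to order `N+1` divides by `t (k+N+1) - t k`. -/
noncomputable def liftTwo (t : ℤ → ℝ) (f : ℤ → ℝ) : ℕ → ℤ → ℝ
  | 0 => f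
  | m + 1 => fun k =>
      (liftTwo t f m (k + 1) - liftTwo t f m k) / (t (k + (m : ℤ) + 3) - t k)

/-- `μ_K^N`, defined for `N ≥ 2` from `μ_K^2[k] = 1_{{K−1}}(k)/(t_{k+2}−t_k)`. -/
noncomputable def muSeq (t : ℤ → ℝ) (K : ℤ) (N : ℕ) : ℤ → ℝ :=
  liftTwo t (fun k => if k = K - 1 then 1 / (t (k + 2) - t k) else 0) (N - 2)

/-- `β_K^N`, defined for `N ≥ 2` from `β_K^2[k] = 1_{{K}}(k)/(t_{k+2}−t_k)`. -/
noncomputable def betaSeq (t : ℤ → ℝ) (K : ℤ) (N : ℕ) : ℤ → ℝ :=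
  liftTwo t (fun k => if k = K then 1 / (t (k + 2) - t k) else 0) (N - 2)

private lemma negOne_zpow_succ (a : ℤ) : (-1 : ℝ) ^ (a + 1) = -(-1 : ℝ) ^ a := by
  rw [zpow_add₀ (by norm_num : (-1 : ℝ) ≠ 0)]
  norm_num

/-- Key sign invariant: if `f` has the alternating-sign bound centered at `K`,
so does every lift. -/
private lemma liftTwo_sign (t : ℤ → ℝ) (ht : StrictMono t) (f : ℤ → ℝ) (K : ℤ)
    (hf : ∀ k, 0 ≤ (-1 : ℝ) ^ (K - k) * f k) :
    ∀ m : ℕ, ∀ k : ℤ, 0 ≤ (-1 : ℝ) ^ (K - k + (m : ℤ)) * liftTwo t f m k := by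
  intro m
  induction m with
  | zero => intro k; simpa [liftTwo] using hf k
  | succ m ih =>
    intro k
    have hd : (0 : ℝ) < t (k + (m : ℤ) + 3) - t k := by
      have : k < k + (m : ℤ) + 3 := by
        have := Int.natCast_nonneg m; linarith
      linarith [ht this]
    have h1 : 0 ≤ (-1 : ℝ) ^ (K - (k + 1) + (m : ℤ)) * liftTwo t f m (k + 1) := ih (k + 1)
    have h2 : 0 ≤ (-1 : ℝ) ^ (K - k + (m : ℤ)) * liftTwo t f m k := ih k
    have e1 : (-1 : ℝ) ^ (K - (k + 1) + (m : ℤ)) = -(-1 : ℝ) ^ (K - k + (m : ℤ)) := by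
      have h : K - k + (m : ℤ) = (K - (k + 1) + (m : ℤ)) + 1 := by ring
      rw [h, negOne_zpow_succ]; ring
    have e2 : (-1 : ℝ) ^ (K - k + ((m + 1 : ℕ) : ℤ)) = -(-1 : ℝ) ^ (K - k + (m : ℤ)) := by
      have h : K - k + ((m + 1 : ℕ) : ℤ) = (K - k + (m : ℤ)) + 1 := by push_cast; ring
      rw [h, negOne_zpow_succ]
    simp only [liftTwo]
    rw [e2]
    rw [e1] at h1
    set a := (-1 : ℝ) ^ (K - k + (m : ℤ)) with ha
    have hnum : 0 ≤ -a * (liftTwo t f m (k + 1) - liftTwo t f m k) := by nlinarith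
    calc (0 : ℝ) ≤ (-a * (liftTwo t f m (k + 1) - liftTwo t f m k)) / (t (k + (m : ℤ) + 3) - t k) :=
          div_nonneg hnum hd.le
      _ = -a * ((liftTwo t f m (k + 1) - liftTwo t f m k) / (t (k + (m : ℤ) + 3) - t k)) := by
          ring

private lemma sign_mul_nonpos_of_mul_nonpos {x y : ℝ} (h : x * y ≤ 0) :
    Real.sign x * Real.sign y ≤ 0 := by
  rcases lt_trichotomy x 0 with hx | hx | hx
  · rcases lt_trichotomy y 0 with hy | hy | hy
    · nlinarith
    · simp [hy, Real.sign_zero]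
    · rw [Real.sign_of_neg hx, Real.sign_of_pos hy]; norm_num
  · rw [hx, Real.sign_zero, zero_mul]
  · rcases lt_trichotomy y 0 with hy | hy | hy
    · rw [Real.sign_of_pos hx, Real.sign_of_neg hy]; norm_num
    · rw [hy, Real.sign_zero, mul_zero]
    · nlinarith

private lemma opp_of_coeffs {a x y : ℝ} (ha : a ≠ 0) (hx : 0 ≤ a * x) (hy : 0 ≤ -a * y) :
    Real.sign x * Real.sign y ≤ 0 := by
  apply sign_mul_nonpos_of_mul_nonpos
  have ha2 : 0 < a ^ 2 := by positivity
  nlinarith [mul_nonneg hx hy]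

/-- sign alternation of `μ_l^N` and `β_l^N`: consecutive values
have non-strictly opposite signs, and `μ` and `β` have non-strictly opposite
signs at every index, for all `N ≥ 2`. -/
theorem sign_alternation_muSeq_betaSeq
    (t : ℤ → ℝ) (ht : StrictMono t) (l : ℤ) (N : ℕ) (hN : 2 ≤ N) (k : ℤ) :
    Real.sign (muSeq t l N k) * Real.sign (muSeq t l N (k + 1)) ≤ 0 ∧
    Real.sign (betaSeq t l N k) * Real.sign (betaSeq t l N (k + 1)) ≤ 0 ∧
    Real.sign (muSeq t l N k) * Real.sign (betaSeq t l N k) ≤ 0 := by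
  set m : ℕ := N - 2 with hm
  -- base sign bounds
  have hbase : ∀ (K : ℤ) (j : ℤ),
      0 ≤ (-1 : ℝ) ^ (K - j) * (if j = K then 1 / (t (j + 2) - t j) else 0) := by
    intro K j
    by_cases h : j = K
    · subst h
      simp only [if_pos rfl, sub_self, zpow_zero, one_mul]
      have h2 : (0:ℝ) < t (j + 2) - t j := sub_pos.mpr (ht (by omega))
      positivity
    · simp [h]
  have hmu := liftTwo_sign t ht
      (fun j => if j = l - 1 then 1 / (t (j + 2) - t j) else 0) (l - 1)
      (hbase (l - 1)) m
  have hbe := liftTwo_sign t ht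
      (fun j => if j = l then 1 / (t (j + 2) - t j) else 0) l
      (hbase l) m
  have hmuk := hmu k
  have hmuk1 := hmu (k + 1)
  have hbek := hbe k
  have hbek1 := hbe (k + 1)
  have emu : muSeq t l N = liftTwo t (fun j => if j = l - 1 then 1 / (t (j + 2) - t j) else 0) m := rfl
  have ebe : betaSeq t l N = liftTwo t (fun j => if j = l then 1 / (t (j + 2) - t j) else 0) m := rfl
  rw [← emu] at hmuk hmuk1
  rw [← ebe] at hbek hbek1
  have eshift : ∀ K : ℤ, (-1 : ℝ) ^ (K - (k + 1) + (m : ℤ)) = -(-1 : ℝ) ^ (K - k + (m : ℤ)) := by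
    intro K
    have h : K - k + (m : ℤ) = (K - (k + 1) + (m : ℤ)) + 1 := by ring
    rw [h, negOne_zpow_succ]; ring
  have ebeta : (-1 : ℝ) ^ (l - k + (m : ℤ)) = -(-1 : ℝ) ^ (l - 1 - k + (m : ℤ)) := by
    have h : l - k + (m : ℤ) = (l - 1 - k + (m : ℤ)) + 1 := by ring
    rw [h, negOne_zpow_succ]
  refine ⟨?_, ?_, ?_⟩
  · exact opp_of_coeffs (zpow_ne_zero _ (by norm_num)) hmuk (by rw [← eshift]; exact hmuk1)
  · exact opp_of_coeffs (zpow_ne_zero _ (by norm_num)) hbek (by rw [← eshift]; exact hbek1)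
  · refine opp_of_coeffs (zpow_ne_zero _ (by norm_num)) hmuk ?_
    rw [← ebeta]; exact hbek
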